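/- Let l12, l13, l23 be positive reals satisfying the strict triangle inequalities, and for w ∈ ℝ³ let l̃ij = exp(wi+wj)·lij; on the open set U ⊆ ℝ³ where l̃ satisfies the strict triangle inequalities let θi(w) ∈ (0,π) be the inner angle at vertex i defined by the law of cosines. Then the Jacobian matrix of the angle map is symmetric at every point of U: ∂θi/∂wj = ∂θj/∂wi for all i, j ∈ {1,2,3}. -/

import Mathlib

/-- Vertex-scaled edge length: `exp (w i + w j) * l i j`. -/
noncomputable def scaledLen (l : Fin 3 → Fin 3 → ℝ) (w : Fin 3 → ℝ) (i j : Fin 3) : ℝ :=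
  Real.exp (w i + w j) * l i j

/-- The inner angle at vertex `i` of the vertex-scaled triangle, by the law of cosines. -/
noncomputable def scaledAngle (l : Fin 3 → Fin 3 → ℝ) (i : Fin 3) (w : Fin 3 → ℝ) : ℝ :=
  Real.arccos ((scaledLen l w i (i + 1) ^ 2 + scaledLen l w i (i + 2) ^ 2
      - scaledLen l w (i + 1) (i + 2) ^ 2) /
    (2 * scaledLen l w i (i + 1) * scaledLen l w i (i + 2)))

noncomputable def angF (l : Fin 3 → Fin 3 → ℝ) (i j k : Fin 3) (w : Fin 3 → ℝ) : ℝ :=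
  Real.arccos ((scaledLen l w i j ^ 2 + scaledLen l w i k ^ 2 - scaledLen l w j k ^ 2) /
    (2 * scaledLen l w i j * scaledLen l w i k))

lemma scaledLen_diff (l : Fin 3 → Fin 3 → ℝ) (w : Fin 3 → ℝ) (i j : Fin 3) :
    DifferentiableAt ℝ (fun w => scaledLen l w i j) w := by
  unfold scaledLen
  exact (((differentiableAt_apply (𝕜 := ℝ) i w).add
    (differentiableAt_apply (𝕜 := ℝ) j w)).exp).mul_const _

lemma scaledLen_line (l : Fin 3 → Fin 3 → ℝ) (w v : Fin 3 → ℝ) (p q : Fin 3) :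
    HasDerivAt (fun t : ℝ => scaledLen l (w + t • v) p q)
      (scaledLen l w p q * (v p + v q)) 0 := by
  have h1 : HasDerivAt (fun t : ℝ => (w + t • v) p + (w + t • v) q) (v p + v q) 0 := by
    simp only [Pi.add_apply, Pi.smul_apply, smul_eq_mul]
    exact (((hasDerivAt_id (0:ℝ)).mul_const (v p)).const_add (w p)).add
      (((hasDerivAt_id (0:ℝ)).mul_const (v q)).const_add (w q)) |>.congr_deriv (by ring)
  have h2 := (h1.exp).mul_const (l p q)
  refine h2.congr_deriv ?_
  simp [scaledLen]
  ring

lemma angF_main (l : Fin 3 → Fin 3 → ℝ) (w : Fin 3 → ℝ) (i j k : Fin 3)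
    (hij : i ≠ j) (hik : i ≠ k) (hjk : j ≠ k)
    (hA : 0 < scaledLen l w i j) (hB : 0 < scaledLen l w i k) (hC : 0 < scaledLen l w j k)
    (h1 : scaledLen l w j k < scaledLen l w i j + scaledLen l w i k)
    (h2 : scaledLen l w i j < scaledLen l w j k + scaledLen l w i k)
    (h3 : scaledLen l w i k < scaledLen l w j k + scaledLen l w i j) :
    DifferentiableAt ℝ (angF l i j k) w ∧
    fderiv ℝ (angF l i j k) w (Pi.single j 1)
      = (scaledLen l w i k ^ 2 + scaledLen l w j k ^ 2 - scaledLen l w i j ^ 2) /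
        Real.sqrt ((scaledLen l w i j + scaledLen l w i k + scaledLen l w j k) *
          (-scaledLen l w i j + scaledLen l w i k + scaledLen l w j k) *
          (scaledLen l w i j - scaledLen l w i k + scaledLen l w j k) *
          (scaledLen l w i j + scaledLen l w i k - scaledLen l w j k)) := by
  set A := scaledLen l w i j with hAdef
  set B := scaledLen l w i k with hBdef
  set C := scaledLen l w j k with hCdef
  have hden : (0:ℝ) < 2 * A * B := by positivity
  set u : ℝ := (A ^ 2 + B ^ 2 - C ^ 2) / (2 * A * B) with hudef
  have hu_lt : u < 1 := by
    rw [hudef, div_lt_one hden]; nlinarith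
  have hu_gt : -1 < u := by
    rw [hudef, lt_div_iff₀ hden]; nlinarith
  have hu1 : u ≠ -1 := by linarith
  have hu2 : u ≠ 1 := by linarith
  have hspos : 0 < Real.sqrt (1 - u ^ 2) :=
    Real.sqrt_pos.mpr (by nlinarith)
  -- differentiability of the quotient map
  have hqdiff : DifferentiableAt ℝ (fun w' =>
      (scaledLen l w' i j ^ 2 + scaledLen l w' i k ^ 2 - scaledLen l w' j k ^ 2) /
      (2 * scaledLen l w' i j * scaledLen l w' i k)) w := by
    have hnum : DifferentiableAt ℝ (fun w' =>
        scaledLen l w' i j ^ 2 + scaledLen l w' i k ^ 2 - scaledLen l w' j k ^ 2) w :=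
      (((scaledLen_diff l w i j).pow 2).add ((scaledLen_diff l w i k).pow 2)).sub
        ((scaledLen_diff l w j k).pow 2)
    have h2 : DifferentiableAt ℝ (fun w' => (2:ℝ) * scaledLen l w' i j) w :=
      (scaledLen_diff l w i j).const_mul 2
    have hden2 : DifferentiableAt ℝ (fun w' =>
        2 * scaledLen l w' i j * scaledLen l w' i k) w :=
      h2.mul (scaledLen_diff l w i k)
    have hinv : DifferentiableAt ℝ (fun w' =>
        (2 * scaledLen l w' i j * scaledLen l w' i k)⁻¹) w :=
      hden2.inv (ne_of_gt hden)
    simp only [div_eq_mul_inv]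
    exact hnum.mul hinv
  have hdiff : DifferentiableAt ℝ (angF l i j k) w := by
    have harc : DifferentiableAt ℝ Real.arccos u :=
      Real.differentiableAt_arccos.mpr ⟨hu1, hu2⟩
    exact harc.comp w hqdiff
  refine ⟨hdiff, ?_⟩
  -- line derivative
  set v : Fin 3 → ℝ := Pi.single j 1 with hvdef
  have hvi : v i = 0 := Pi.single_eq_of_ne hij 1
  have hvj : v j = 1 := Pi.single_eq_same j 1
  have hvk : v k = 0 := Pi.single_eq_of_ne (Ne.symm hjk) 1
  have hlA := scaledLen_line l w v i j
  have hlB := scaledLen_line l w v i k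
  have hlC := scaledLen_line l w v j k
  simp only [hvi, hvj, hvk, add_zero, zero_add, mul_one, mul_zero] at hlA hlB hlC
  have hNum := ((hlA.pow 2).add (hlB.pow 2)).sub (hlC.pow 2)
  have hDen := (hlA.const_mul 2).mul hlB
  have hq := hNum.div hDen (by
    simp only [Pi.mul_apply, zero_smul, add_zero]
    exact ne_of_gt hden)
  simp only [zero_smul, add_zero, Pi.mul_apply, Pi.add_apply, Pi.sub_apply, Pi.pow_apply] at hq
  have hqpt : ((scaledLen l (w + (0:ℝ) • v) i j ^ 2 + scaledLen l (w + (0:ℝ) • v) i k ^ 2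
      - scaledLen l (w + (0:ℝ) • v) j k ^ 2) /
      (2 * scaledLen l (w + (0:ℝ) • v) i j * scaledLen l (w + (0:ℝ) • v) i k)) = u := by
    simp only [zero_smul, add_zero, hudef]
    rfl
  have harc := Real.hasDerivAt_arccos hu1 hu2
  rw [← hqpt] at harc
  have hline := harc.comp 0 hq
  -- identify fderiv applied to v with the line derivative
  have hw0 : w + (0:ℝ) • v = w := by simp
  have hgd : HasDerivAt (fun t : ℝ => w + t • v) v 0 := by
    have := ((hasDerivAt_id (0:ℝ)).smul_const v).const_add w
    simpa using this
  have hF : HasFDerivAt (angF l i j k) (fderiv ℝ (angF l i j k) w) w :=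
    hdiff.hasFDerivAt
  rw [← hw0] at hF
  have hline' := hF.comp_hasDerivAt 0 hgd
  rw [hw0] at hline'
  have hval := hline'.unique hline
  simp only [zero_smul, add_zero] at hval
  rw [hval]
  -- now pure computation
  have hH : Real.sqrt ((A + B + C) * (-A + B + C) * (A - B + C) * (A + B - C))
      = 2 * A * B * Real.sqrt (1 - u ^ 2) := by
    rw [show (A + B + C) * (-A + B + C) * (A - B + C) * (A + B - C)
        = (2 * A * B * Real.sqrt (1 - u ^ 2)) ^ 2 by
      rw [mul_pow, mul_pow, Real.sq_sqrt (by nlinarith)]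
      rw [hudef]
      field_simp
      ring]
    exact Real.sqrt_sq (by positivity)
  rw [← hAdef, ← hBdef, ← hCdef, hH, ← hudef]
  have hs : Real.sqrt (1 - u ^ 2) ≠ 0 := ne_of_gt hspos
  have hA0 : A ≠ 0 := ne_of_gt hA
  have hB0 : B ≠ 0 := ne_of_gt hB
  norm_num
  field_simp
  ring

lemma angF_swap (l : Fin 3 → Fin 3 → ℝ) (hsymm : ∀ i j, l i j = l j i) (i j k : Fin 3) :
    angF l i j k = angF l i k j := by
  funext w
  unfold angF
  rw [show scaledLen l w j k = scaledLen l w k j from by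
    simp [scaledLen, hsymm j k, add_comm]]
  congr 1
  ring

theorem angle_jacobian_symmetric
    (l : Fin 3 → Fin 3 → ℝ)
    (hsymm : ∀ i j, l i j = l j i)
    (hpos : ∀ i j, i ≠ j → 0 < l i j)
    (htri : ∀ i : Fin 3, l (i + 1) (i + 2) < l i (i + 1) + l i (i + 2))
    (w : Fin 3 → ℝ)
    (hw : ∀ i : Fin 3,
      scaledLen l w (i + 1) (i + 2) < scaledLen l w i (i + 1) + scaledLen l w i (i + 2)) :
    (∀ i : Fin 3, DifferentiableAt ℝ (scaledAngle l i) w) ∧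
    ∀ i j : Fin 3,
      fderiv ℝ (scaledAngle l i) w (Pi.single j 1)
        = fderiv ℝ (scaledAngle l j) w (Pi.single i 1) := by
  have e_symm : ∀ a b : Fin 3, scaledLen l w a b = scaledLen l w b a := by
    intro a b; simp [scaledLen, hsymm a b, add_comm]
  have e_pos : ∀ a b : Fin 3, a ≠ b → 0 < scaledLen l w a b := fun a b h =>
    mul_pos (Real.exp_pos _) (hpos a b h)
  have f1 : ∀ i : Fin 3, i + 1 + 1 = i + 2 := by decide
  have f2 : ∀ i : Fin 3, i + 1 + 2 = i := by decide
  have f3 : ∀ i : Fin 3, i + 2 + 1 = i := by decide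
  have f4 : ∀ i : Fin 3, i + 2 + 2 = i + 1 := by decide
  have d1 : ∀ i : Fin 3, i ≠ i + 1 := by decide
  have d2 : ∀ i : Fin 3, i ≠ i + 2 := by decide
  have d3 : ∀ i : Fin 3, i + 1 ≠ i + 2 := by decide
  have t1 := hw
  have t2 : ∀ i : Fin 3, scaledLen l w i (i+1)
      < scaledLen l w (i+1) (i+2) + scaledLen l w i (i+2) := by
    intro i
    have h := hw (i + 2)
    rw [f3 i, f4 i, e_symm (i+2) i, e_symm (i+2) (i+1)] at h
    linarith
  have t3 : ∀ i : Fin 3, scaledLen l w i (i+2)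
      < scaledLen l w (i+1) (i+2) + scaledLen l w i (i+1) := by
    intro i
    have h := hw (i + 1)
    rw [f1 i, f2 i, e_symm (i+1) i, e_symm (i+2) i] at h
    linarith
  have main := fun i : Fin 3 =>
    angF_main l w i (i+1) (i+2) (d1 i) (d2 i) (d3 i)
      (e_pos _ _ (d1 i)) (e_pos _ _ (d2 i)) (e_pos _ _ (d3 i)) (t1 i) (t2 i) (t3 i)
  have main2 : ∀ i : Fin 3,
      DifferentiableAt ℝ (angF l (i+1) i (i+2)) w ∧
      fderiv ℝ (angF l (i+1) i (i+2)) w (Pi.single i 1)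
        = (scaledLen l w (i+1) (i+2) ^ 2 + scaledLen l w i (i+2) ^ 2
            - scaledLen l w (i+1) i ^ 2) /
          Real.sqrt ((scaledLen l w (i+1) i + scaledLen l w (i+1) (i+2) + scaledLen l w i (i+2)) *
            (-scaledLen l w (i+1) i + scaledLen l w (i+1) (i+2) + scaledLen l w i (i+2)) *
            (scaledLen l w (i+1) i - scaledLen l w (i+1) (i+2) + scaledLen l w i (i+2)) *
            (scaledLen l w (i+1) i + scaledLen l w (i+1) (i+2) - scaledLen l w i (i+2))) := by
    intro i
    refine angF_main l w (i+1) i (i+2) (Ne.symm (d1 i)) (d3 i) (d2 i)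
      (e_pos _ _ (Ne.symm (d1 i))) (e_pos _ _ (d3 i)) (e_pos _ _ (d2 i)) ?_ ?_ ?_
    · rw [e_symm (i+1) i]; linarith [t3 i]
    · rw [e_symm (i+1) i]; linarith [t2 i]
    · rw [e_symm (i+1) i]; linarith [t1 i]
  have key : ∀ i : Fin 3, fderiv ℝ (scaledAngle l i) w (Pi.single (i+1) 1)
      = fderiv ℝ (scaledAngle l (i+1)) w (Pi.single i 1) := by
    intro i
    have hls : scaledAngle l i = angF l i (i+1) (i+2) := rfl
    have hrs : scaledAngle l (i+1) = angF l (i+1) i (i+2) := by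
      rw [show scaledAngle l (i+1) = angF l (i+1) (i+1+1) (i+1+2) from rfl, f1 i, f2 i,
        angF_swap l hsymm (i+1) (i+2) i]
    rw [hls, hrs, (main i).2, (main2 i).2, e_symm (i+1) i]
    congr 1
    · ring
    · congr 1
      ring
  refine ⟨fun i => (main i).1, ?_⟩
  intro i j
  rcases eq_or_ne i j with rfl | hne
  · rfl
  · have hcase : ∀ i j : Fin 3, i ≠ j → j = i + 1 ∨ j = i + 2 := by decide
    rcases hcase i j hne with rfl | rfl
    · exact key i
    · have h := key (i + 2)
      rw [f3 i] at h
      exact h.symm
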